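/- For every integer n ≥ 2 and every integer q ≥ 1, set P_q = 2(2n²−1)q(q+2n−1) − 4n(2n−1) and t_q := sqrt( (sqrt(P_q² + 8n²(n−1)²(5n−2)) − P_q)/(4n(n−1)) ). Then 0 < t_q ≤ b_B(n), t_1 = b_B(n), and scal_B(n, t_q)/(2n²−1) = q(q+2n−1)/(2(2n−1)); that is, t_q is a degeneracy instant of the canonical variation h_t on SO(2n+1)/Tⁿ, at which scal(h_t)/(m−1) equals the eigenvalue q(q+2n−1)/(2(2n−1)) of the Laplacian of the base sphere S²ⁿ. -/

import Mathlib

set_option maxHeartbeats 1000000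


/-- Scalar curvature of the canonical variation `h_t` of the normal homogeneous
metric on the full flag manifold `SO(2n+1)/Tⁿ`. -/
noncomputable def scalB (n : ℕ) (t : ℝ) : ℝ :=
  (5 * n ^ 3 - 2 * n ^ 2 * t ^ 4 + 8 * n ^ 2 * t ^ 2 - 7 * n ^ 2
    + 2 * n * t ^ 4 - 4 * n * t ^ 2 + 2 * n) / (4 * (2 * n - 1) * t ^ 2)

/-- The first degeneracy instant of `h_t` on `SO(2n+1)/Tⁿ`. -/
noncomputable def bB (n : ℕ) : ℝ :=
  Real.sqrt (Real.sqrt ((8 * n ^ 2 + 5 * n - 2) / 2) - 2 * n)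

/-- The auxiliary quantity `P_q = 2(2n²-1)q(q+2n-1) - 4n(2n-1)`. -/
noncomputable def PB (n q : ℕ) : ℝ :=
  2 * (2 * n ^ 2 - 1) * q * (q + 2 * n - 1) - 4 * n * (2 * n - 1)

/-- The degeneracy instants `t_q` of `h_t` on `SO(2n+1)/Tⁿ`. -/
noncomputable def tB (n q : ℕ) : ℝ :=
  Real.sqrt ((Real.sqrt ((PB n q) ^ 2 + 8 * n ^ 2 * (n - 1) ^ 2 * (5 * n - 2)) - PB n q)
    / (4 * n * (n - 1)))

lemma lt_sqrt_add_of_pos {P D : ℝ} (hD : 0 < D) : P < Real.sqrt (P ^ 2 + D) := by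
  have h0 : 0 ≤ P ^ 2 + D := by nlinarith [sq_nonneg P]
  have hs := Real.sq_sqrt h0
  have hnn := Real.sqrt_nonneg (P ^ 2 + D)
  nlinarith [hs, hnn]

lemma D_pos (n : ℕ) (hn : 2 ≤ n) :
    (0 : ℝ) < 8 * (n : ℝ) ^ 2 * ((n : ℝ) - 1) ^ 2 * (5 * (n : ℝ) - 2) := by
  have hN : (2 : ℝ) ≤ (n : ℝ) := by exact_mod_cast hn
  have h1 : (0 : ℝ) < (n : ℝ) ^ 2 := by nlinarith
  have h2 : (0 : ℝ) < ((n : ℝ) - 1) ^ 2 := by nlinarith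
  have h3 : (0 : ℝ) < 5 * (n : ℝ) - 2 := by nlinarith
  nlinarith [mul_pos (mul_pos h1 h2) h3]

lemma tB_pos_sq (n q : ℕ) (hn : 2 ≤ n) :
    0 < tB n q ∧
    (tB n q) ^ 2 = (Real.sqrt ((PB n q) ^ 2 + 8 * n ^ 2 * ((n : ℝ) - 1) ^ 2 * (5 * n - 2))
      - PB n q) / (4 * n * ((n : ℝ) - 1)) := by
  have hN : (2 : ℝ) ≤ (n : ℝ) := by exact_mod_cast hn
  have hD := D_pos n hn
  have hP := lt_sqrt_add_of_pos (P := PB n q) hD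
  have hden : (0 : ℝ) < 4 * (n : ℝ) * ((n : ℝ) - 1) := by nlinarith
  have harg : 0 < (Real.sqrt ((PB n q) ^ 2 + 8 * n ^ 2 * ((n : ℝ) - 1) ^ 2 * (5 * n - 2))
      - PB n q) / (4 * n * ((n : ℝ) - 1)) := by
    apply div_pos (by linarith) hden
  constructor
  · exact Real.sqrt_pos.mpr harg
  · exact Real.sq_sqrt harg.le

/-- For `n ≥ 2` and `q ≥ 1`, `t_q` satisfies `0 < t_q ≤ b_B(n)`, `t_1 = b_B(n)`,
and `scal_B(n,t_q)/(2n²-1) = q(q+2n-1)/(2(2n-1))`: `t_q` is a degeneracy instant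
at which `scal(h_t)/(m-1)` equals the eigenvalue `q(q+2n-1)/(2(2n-1))` of the
Laplacian of the base sphere `S²ⁿ`. -/
theorem tB_degeneracy (n : ℕ) (hn : 2 ≤ n) (q : ℕ) (hq : 1 ≤ q) :
    (0 < tB n q ∧ tB n q ≤ bB n) ∧ tB n 1 = bB n ∧
    scalB n (tB n q) / (2 * n ^ 2 - 1) = q * (q + 2 * n - 1) / (2 * (2 * n - 1)) := by
  have hN : (2 : ℝ) ≤ (n : ℝ) := by exact_mod_cast hn
  have hQ : (1 : ℝ) ≤ (q : ℝ) := by exact_mod_cast hq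
  have hD := D_pos n hn
  have hden : (0 : ℝ) < 4 * (n : ℝ) * ((n : ℝ) - 1) := by nlinarith
  obtain ⟨htq_pos, htq_sq⟩ := tB_pos_sq n q hn
  obtain ⟨ht1_pos, ht1_sq⟩ := tB_pos_sq n 1 hn
  have hP1 : PB n 1 = 8 * (n : ℝ) ^ 3 - 8 * (n : ℝ) ^ 2 := by
    simp only [PB, Nat.cast_one]; push_cast; ring
  -- `t_1 = b_B`
  have hsqrt1 : Real.sqrt ((PB n 1) ^ 2 + 8 * (n : ℝ) ^ 2 * ((n : ℝ) - 1) ^ 2 * (5 * (n : ℝ) - 2)) =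
      4 * (n : ℝ) * ((n : ℝ) - 1) * Real.sqrt ((8 * (n : ℝ) ^ 2 + 5 * (n : ℝ) - 2) / 2) := by
    have h1 : (PB n 1) ^ 2 + 8 * (n : ℝ) ^ 2 * ((n : ℝ) - 1) ^ 2 * (5 * (n : ℝ) - 2) =
        (4 * (n : ℝ) * ((n : ℝ) - 1)) ^ 2 * ((8 * (n : ℝ) ^ 2 + 5 * (n : ℝ) - 2) / 2) := by
      rw [hP1]; ring
    rw [h1, Real.sqrt_mul (by positivity), Real.sqrt_sq hden.le]
  have ht1 : tB n 1 = bB n := by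
    rw [tB, bB]
    congr 1
    rw [hsqrt1, hP1, div_eq_iff hden.ne']
    ring
  -- monotonicity: `PB n 1 ≤ PB n q`
  have hfac : (0 : ℝ) ≤ ((q : ℝ) - 1) * ((q : ℝ) + 2 * (n : ℝ)) :=
    mul_nonneg (by linarith) (by linarith)
  have h2N2pos : (0 : ℝ) ≤ 2 * (n : ℝ) ^ 2 - 1 := by nlinarith
  have hPmono : PB n 1 ≤ PB n q := by
    rw [hP1]
    simp only [PB]
    nlinarith [mul_nonneg h2N2pos hfac]
  have hPD1 : (0:ℝ) ≤ (PB n 1) ^ 2 + 8 * (n : ℝ) ^ 2 * ((n : ℝ) - 1) ^ 2 * (5 * (n : ℝ) - 2) := by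
    nlinarith [sq_nonneg (PB n 1)]
  have hR1 := Real.sq_sqrt hPD1
  have hR1P : PB n 1 ≤
      Real.sqrt ((PB n 1) ^ 2 + 8 * (n : ℝ) ^ 2 * ((n : ℝ) - 1) ^ 2 * (5 * (n : ℝ) - 2)) :=
    (lt_sqrt_add_of_pos hD).le
  have hmain : Real.sqrt ((PB n q) ^ 2 + 8 * (n : ℝ) ^ 2 * ((n : ℝ) - 1) ^ 2 * (5 * (n : ℝ) - 2))
      - PB n q ≤
      Real.sqrt ((PB n 1) ^ 2 + 8 * (n : ℝ) ^ 2 * ((n : ℝ) - 1) ^ 2 * (5 * (n : ℝ) - 2))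
      - PB n 1 := by
    set R1 := Real.sqrt ((PB n 1) ^ 2 + 8 * (n : ℝ) ^ 2 * ((n : ℝ) - 1) ^ 2 * (5 * (n : ℝ) - 2))
    have hR1nn : 0 ≤ R1 := Real.sqrt_nonneg _
    have hle : Real.sqrt ((PB n q) ^ 2 + 8 * (n : ℝ) ^ 2 * ((n : ℝ) - 1) ^ 2 * (5 * (n : ℝ) - 2)) ≤
        R1 + (PB n q - PB n 1) := by
      have h2 : (PB n q) ^ 2 + 8 * (n : ℝ) ^ 2 * ((n : ℝ) - 1) ^ 2 * (5 * (n : ℝ) - 2) ≤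
          (R1 + (PB n q - PB n 1)) ^ 2 := by
        nlinarith [mul_le_mul_of_nonneg_right hR1P (sub_nonneg.mpr hPmono), hR1]
      calc Real.sqrt ((PB n q) ^ 2 + 8 * (n : ℝ) ^ 2 * ((n : ℝ) - 1) ^ 2 * (5 * (n : ℝ) - 2))
          ≤ Real.sqrt ((R1 + (PB n q - PB n 1)) ^ 2) := Real.sqrt_le_sqrt h2
        _ = R1 + (PB n q - PB n 1) := Real.sqrt_sq (by linarith)
    linarith
  have htle : tB n q ≤ bB n := by
    rw [← ht1, tB, tB]
    apply Real.sqrt_le_sqrt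
    exact (div_le_div_iff_of_pos_right hden).mpr hmain
  -- the key algebraic identity
  have hPDq : (0:ℝ) ≤ (PB n q) ^ 2 + 8 * (n : ℝ) ^ 2 * ((n : ℝ) - 1) ^ 2 * (5 * (n : ℝ) - 2) := by
    nlinarith [sq_nonneg (PB n q)]
  have hRq := Real.sq_sqrt hPDq
  have h3 : Real.sqrt ((PB n q) ^ 2 + 8 * (n : ℝ) ^ 2 * ((n : ℝ) - 1) ^ 2 * (5 * (n : ℝ) - 2)) =
      4 * (n : ℝ) * ((n : ℝ) - 1) * tB n q ^ 2 + PB n q := by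
    have hn1 : (n:ℝ) - 1 ≠ 0 := by linarith
    rw [htq_sq]; field_simp; ring
  rw [h3] at hRq
  have hkey : 16 * (n : ℝ) ^ 2 * ((n : ℝ) - 1) ^ 2 * (tB n q ^ 2) ^ 2
      + 8 * (n : ℝ) * ((n : ℝ) - 1) * PB n q * (tB n q ^ 2)
      = 8 * (n : ℝ) ^ 2 * ((n : ℝ) - 1) ^ 2 * (5 * (n : ℝ) - 2) := by
    linear_combination hRq
  have hkey2 : 2 * (n : ℝ) * ((n : ℝ) - 1) * (tB n q ^ 2) ^ 2 + PB n q * (tB n q ^ 2)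
      = (n : ℝ) * ((n : ℝ) - 1) * (5 * (n : ℝ) - 2) := by
    have h8 : (8 : ℝ) * (n : ℝ) * ((n : ℝ) - 1) ≠ 0 := by nlinarith
    apply mul_left_cancel₀ h8
    linear_combination hkey
  have hPq : PB n q =
      2 * (2 * (n : ℝ) ^ 2 - 1) * (q : ℝ) * ((q : ℝ) + 2 * (n : ℝ) - 1)
        - 4 * (n : ℝ) * (2 * (n : ℝ) - 1) := by
    simp only [PB]
  rw [hPq] at hkey2
  -- scalar curvature equation
  have htne : tB n q ≠ 0 := htq_pos.ne'
  have h2N1 : (2 : ℝ) * (n : ℝ) - 1 ≠ 0 := by nlinarith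
  have h2N2 : (2 : ℝ) * (n : ℝ) ^ 2 - 1 ≠ 0 := by nlinarith
  refine ⟨⟨htq_pos, htle⟩, ht1, ?_⟩
  rw [scalB]
  rw [div_div, div_eq_div_iff (by positivity) (by
    intro h
    rcases mul_eq_zero.mp h with h' | h'
    · exact h2N1 (by linarith)
    · exact h2N1 h')]
  linear_combination (-(2 * (2 * (n : ℝ) - 1))) * hkey2
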